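/- Let p₁,...,p_N be distinct primes and n₁,...,n_N positive integers. If the polynomial ∏ᵢ (kᵢ t² − (2kᵢ+1)t + kᵢ)^{nᵢ}, where 4kᵢ+1 = pᵢ and the quadratics kᵢt² − (2kᵢ+1)t + kᵢ are irreducible over ℚ, factors as f(t)·f(1/t)·t^{deg f} up to a unit for some f ∈ ℚ[t], then every nᵢ is even. -/

import Mathlib

open Polynomial

/-- The Alexander polynomial `k t² − (2k+1) t + k` of the `k`-twisted double of the unknot. -/
noncomputable def twistPoly (k : ℕ) : Polynomial ℚ :=
  C (k : ℚ) * X ^ 2 - C (2 * (k : ℚ) + 1) * X + C (k : ℚ)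

lemma twist_coeff0 (k : ℕ) : (twistPoly k).coeff 0 = k := by
  simp [twistPoly, coeff_X_pow]

lemma twist_coeff1 (k : ℕ) : (twistPoly k).coeff 1 = -(2*(k:ℚ)+1) := by
  simp [twistPoly, coeff_X_pow]

lemma twist_coeff2 (k : ℕ) : (twistPoly k).coeff 2 = k := by
  simp [twistPoly, coeff_X_pow, coeff_one]

lemma twist_natDegree {k : ℕ} (hk : (k:ℚ) ≠ 0) : (twistPoly k).natDegree = 2 := by
  unfold twistPoly; compute_degree!
  simpa using hk

lemma twist_mirror {k : ℕ} (hk : (k:ℚ) ≠ 0) : (twistPoly k).mirror = twistPoly k := by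
  have h0 : (twistPoly k).natTrailingDegree = 0 :=
    natTrailingDegree_eq_zero.mpr (Or.inr (by rw [twist_coeff0]; exact hk))
  rw [Polynomial.mirror, h0, pow_zero, mul_one, Polynomial.reverse, twist_natDegree hk]
  have : twistPoly k = C (k:ℚ) * X ^ 2 - C (2*(k:ℚ)+1) * X ^ 1 + C (k:ℚ) * X ^ 0 := by
    simp [twistPoly]
  rw [this, reflect_add, reflect_sub, reflect_C_mul_X_pow, reflect_C_mul_X_pow,
    reflect_C_mul_X_pow]
  rw [revAt_le (show 2 ≤ 2 by norm_num), revAt_le (show 1 ≤ 2 by norm_num), revAt_le (show 0 ≤ 2 by norm_num)]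
  norm_num [Polynomial.revAt]
  ring

lemma mirror_pow (q : Polynomial ℚ) (m : ℕ) : (q ^ m).mirror = q.mirror ^ m := by
  induction m with
  | zero => simpa using Polynomial.mirror_C (1:ℚ)
  | succ m ih => rw [pow_succ, Polynomial.mirror_mul_of_domain, ih, pow_succ]

lemma dvd_mirror_of_dvd {q f : Polynomial ℚ} (hq : q.mirror = q) {m : ℕ}
    (h : q ^ m ∣ f) : q ^ m ∣ f.mirror := by
  obtain ⟨g, rfl⟩ := h
  rw [Polynomial.mirror_mul_of_domain, mirror_pow, hq]
  exact Dvd.intro _ rfl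

lemma emult_mirror {q f : Polynomial ℚ} (hq : q.mirror = q) :
    emultiplicity q f.mirror = emultiplicity q f := by
  rw [emultiplicity_eq_emultiplicity_iff]
  intro m
  constructor
  · intro h
    have := dvd_mirror_of_dvd hq h
    rwa [Polynomial.mirror_mirror] at this
  · exact dvd_mirror_of_dvd hq

/-- If the product `∏ᵢ (kᵢt² − (2kᵢ+1)t + kᵢ)^{nᵢ}` (with `4kᵢ+1 = pᵢ` distinct primes and
each quadratic irreducible over `ℚ`) factors up to a unit as `f(t)·(t^{deg f}·f(1/t))`,
then every `nᵢ` is even. -/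
theorem stmt_11 (N : ℕ) (p k n : Fin N → ℕ)
    (hp : ∀ i, (p i).Prime) (hdist : Function.Injective p)
    (hn : ∀ i, 0 < n i) (hk : ∀ i, 4 * k i + 1 = p i)
    (hirr : ∀ i, Irreducible (twistPoly (k i)))
    (hfact : ∃ (a : ℚ) (f : Polynomial ℚ), a ≠ 0 ∧
      ∏ i, (twistPoly (k i)) ^ (n i) = C a * (f * f.reverse)) :
    ∀ i, Even (n i) := by
  obtain ⟨a, f, ha, hfac⟩ := hfact
  intro i
  -- basic facts
  have hkne : ∀ j, ((k j : ℚ)) ≠ 0 := by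
    intro j hj
    have h0 : k j = 0 := by exact_mod_cast hj
    have h1 := hk j
    rw [h0] at h1
    simp at h1
    exact Nat.Prime.ne_one (hp j) h1.symm
  have hprime : ∀ j, Prime (twistPoly (k j)) := fun j => (hirr j).prime
  have hkinj : Function.Injective k := by
    intro i j hij
    apply hdist
    rw [← hk i, ← hk j, hij]
  -- q_i does not divide q_j for i ≠ j
  have hndvd : ∀ j, j ≠ i → ¬ twistPoly (k i) ∣ twistPoly (k j) := by
    intro j hij hdvd
    have hassoc := (hirr i).associated_of_dvd (hirr j) hdvd
    obtain ⟨u, hu⟩ := hassoc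
    obtain ⟨c, hc, hcu⟩ := Polynomial.isUnit_iff.mp u.isUnit
    rw [← hcu] at hu
    have h2 := congrArg (fun g => Polynomial.coeff g 2) hu
    have h1 := congrArg (fun g => Polynomial.coeff g 1) hu
    simp only [Polynomial.coeff_mul_C] at h2 h1
    rw [twist_coeff2, twist_coeff2] at h2
    rw [twist_coeff1, twist_coeff1] at h1
    have hc1 : c = 1 := by
      have hki := hkne i
      field_simp at h1 h2 ⊢
      nlinarith [h1, h2]
    rw [hc1, mul_one] at h2
    have hkk : k i = k j := by exact_mod_cast h2
    exact hij (hkinj hkk).symm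
  -- compute emultiplicity of LHS
  have hL : emultiplicity (twistPoly (k i)) (∏ j, (twistPoly (k j)) ^ (n j)) = (n i : ℕ∞) := by
    rw [Finset.emultiplicity_prod (hprime i)]
    rw [Finset.sum_eq_single i]
    · rw [emultiplicity_pow_self_of_prime (hprime i)]
    · intro j _ hji
      rw [emultiplicity_pow (hprime i), emultiplicity_eq_zero.mpr (hndvd j hji)]
      simp
    · simp
  -- RHS
  have hmir : (twistPoly (k i)).mirror = twistPoly (k i) := twist_mirror (hkne i)
  have hErev : emultiplicity (twistPoly (k i)) f.reverse = emultiplicity (twistPoly (k i)) f := by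
    have hX : ¬ twistPoly (k i) ∣ X := by
      intro h
      have := Polynomial.natDegree_le_of_dvd h Polynomial.X_ne_zero
      rw [twist_natDegree (hkne i), Polynomial.natDegree_X] at this
      omega
    have := emult_mirror (f := f) hmir
    rw [Polynomial.mirror, emultiplicity_mul (hprime i), emultiplicity_pow (hprime i),
      emultiplicity_eq_zero.mpr hX] at this
    simpa using this
  have hCa : emultiplicity (twistPoly (k i)) (C a) = 0 :=
    emultiplicity_eq_zero.mpr fun h =>
      (hirr i).not_isUnit (isUnit_of_dvd_unit h (Polynomial.isUnit_C.mpr (isUnit_iff_ne_zero.mpr ha)))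
  have hR : emultiplicity (twistPoly (k i)) (C a * (f * f.reverse)) =
      2 * emultiplicity (twistPoly (k i)) f := by
    rw [emultiplicity_mul (hprime i), emultiplicity_mul (hprime i), hCa, hErev]
    ring
  rw [hfac, hR] at hL
  rcases eq_top_or_lt_top (emultiplicity (twistPoly (k i)) f) with h | h
  · rw [h] at hL
    simp at hL
  · lift emultiplicity (twistPoly (k i)) f to ℕ using h.ne with m hm
    have : n i = 2 * m := by exact_mod_cast hL.symm
    exact ⟨m, by omega⟩
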